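/- Let λ = (λ_1,…,λ_s) be an ordered partition of r, and for every pattern P ∈ 𝒫(λ) let m_P be a positive integer. Let H be a collection of pairwise disjoint r-element subsets of ℤ which is interval-wise λ-partite. If for every P ∈ 𝒫(λ) every P-clique in H has size at most m_P, then |H| ≤ ∏_{P ∈ 𝒫(λ)} m_P. -/

import Mathlib

/-- A block `A^k B^k` (if `b = true`) or `B^k A^k` (if `b = false`), where `true` encodes
the letter A and `false` encodes the letter B. -/
def pblock (k : ℕ) (b : Bool) : List Bool :=
  if b then List.replicate k true ++ List.replicate k false
  else List.replicate k false ++ List.replicate k true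

/-- An `r`-pattern: a string in `{A,B}^{2r}` starting with A, with `r` A's and `r` B's.
Here `true` encodes A and `false` encodes B. -/
def IsPattern (r : ℕ) (P : List Bool) : Prop :=
  P.length = 2 * r ∧ P.count true = r ∧ P.head? = some true

/-- The pattern determined by the pair of disjoint finite sets `(e, f)`: list the elements of
`e ∪ f` in increasing order and record membership in `e` (A = `true`) vs `f` (B = `false`). -/
def patternOfPair (e f : Finset ℤ) : List Bool :=
  ((e ∪ f).sort (· ≤ ·)).map (fun x => decide (x ∈ e))

/-- The unordered pair `{e, f}` realizes the pattern `P`. -/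
def Realizes (P : List Bool) (e f : Finset ℤ) : Prop :=
  patternOfPair e f = P ∨ patternOfPair f e = P

/-- A collection `S` is a `P`-clique if every pair of distinct members realizes the pattern `P`. -/
def IsPClique (P : List Bool) (S : Finset (Finset ℤ)) : Prop :=
  ∀ e ∈ S, ∀ f ∈ S, e ≠ f → Realizes P e f

/-- The collectable pattern with block sizes `2·lam 0, 2·lam 1, …` and block orientations
given by `τ` (`true` = `A^k B^k`, `false` = `B^k A^k`). -/
def patternOfParts (lam : List ℕ) (τ : Fin lam.length → Bool) : List Bool :=
  (List.ofFn (fun i => pblock (lam.get i) (τ i))).flatten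

/-- `𝒫(lam)`: the set of collectable patterns whose block partition has block sizes
`2·lam 0, 2·lam 1, …` in order (the first block must start with A). -/
def patternFinset (lam : List ℕ) : Finset (List Bool) :=
  (Finset.univ.filter (fun τ : Fin lam.length → Bool =>
      ∀ h : 0 < lam.length, τ ⟨0, h⟩ = true)).image (patternOfParts lam)

/-- An ordered partition of `r`: a list of positive integers summing to `r`. -/
def IsOrderedPartition (r : ℕ) (lam : List ℕ) : Prop :=
  lam.sum = r ∧ ∀ k ∈ lam, 0 < k

/-- A pattern is collectable if it admits a block partition. -/
def Collectable (r : ℕ) (P : List Bool) : Prop :=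
  ∃ lam : List ℕ, IsOrderedPartition r lam ∧ P ∈ patternFinset lam

/-- `H` is `lam`-partite: there are non-integer reals `x 0 < x 1 < … < x s` such that every
`e ∈ H` has exactly `lam.get i` elements in the interval `(x i, x (i+1))`. -/
def IsLamPartite (lam : List ℕ) (H : Finset (Finset ℤ)) : Prop :=
  ∃ x : Fin (lam.length + 1) → ℝ, StrictMono x ∧ (∀ i, ∀ z : ℤ, (z : ℝ) ≠ x i) ∧
    ∀ e ∈ H, ∀ i : Fin lam.length,
      {z : ℤ | z ∈ e ∧ x i.castSucc < (z : ℝ) ∧ (z : ℝ) < x i.succ}.ncard = lam.get i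

/-- `H` is interval-wise `lam`-partite: `lam`-partite, and moreover for each `i` the convex
hulls of the parts `e ∩ (x i, x (i+1))` are pairwise disjoint over `e ∈ H` (equivalently, for
distinct `e, f ∈ H` all elements of one part precede all elements of the other part). -/
def IsIntervalWisePartite (lam : List ℕ) (H : Finset (Finset ℤ)) : Prop :=
  ∃ x : Fin (lam.length + 1) → ℝ, StrictMono x ∧ (∀ i, ∀ z : ℤ, (z : ℝ) ≠ x i) ∧
    (∀ e ∈ H, ∀ i : Fin lam.length,
      {z : ℤ | z ∈ e ∧ x i.castSucc < (z : ℝ) ∧ (z : ℝ) < x i.succ}.ncard = lam.get i) ∧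
    ∀ i : Fin lam.length, ∀ e ∈ H, ∀ f ∈ H, e ≠ f →
      (∀ a ∈ e, ∀ b ∈ f,
        (x i.castSucc < (a : ℝ) ∧ (a : ℝ) < x i.succ) →
        (x i.castSucc < (b : ℝ) ∧ (b : ℝ) < x i.succ) → a < b) ∨
      (∀ a ∈ e, ∀ b ∈ f,
        (x i.castSucc < (a : ℝ) ∧ (a : ℝ) < x i.succ) →
        (x i.castSucc < (b : ℝ) ∧ (b : ℝ) < x i.succ) → b < a)

section Aux
open Finset

lemma aux_mem_foldr_union {z : ℤ} : ∀ (L : List (Finset ℤ)),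
    (z ∈ L.foldr (· ∪ ·) ∅ ↔ ∃ C ∈ L, z ∈ C)
  | [] => by simp
  | A :: L => by simp [List.foldr_cons, Finset.mem_union, aux_mem_foldr_union L]

lemma aux_sort_union {A B : Finset ℤ} (h : ∀ a ∈ A, ∀ b ∈ B, a < b) :
    (A ∪ B).sort (· ≤ ·) = A.sort (· ≤ ·) ++ B.sort (· ≤ ·) := by
  have hdisj : Disjoint A B :=
    Finset.disjoint_left.mpr fun {a} ha hb => absurd (h a ha a hb) (lt_irrefl a)
  have hperm : ((A ∪ B).sort (· ≤ ·)).Perm (A.sort (· ≤ ·) ++ B.sort (· ≤ ·)) := by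
    have hadd : ((A.sort (· ≤ ·) ++ B.sort (· ≤ ·) : List ℤ) : Multiset ℤ)
        = (A.sort (· ≤ ·) : Multiset ℤ) + (B.sort (· ≤ ·) : Multiset ℤ) := rfl
    rw [← Multiset.coe_eq_coe, hadd, Finset.sort_eq, Finset.sort_eq, Finset.sort_eq,
      ← Finset.disjUnion_eq_union A B hdisj]
    rfl
  have hsorted : List.Pairwise (· ≤ ·) (A.sort (· ≤ ·) ++ B.sort (· ≤ ·)) := by
    rw [List.pairwise_append]
    refine ⟨Finset.pairwise_sort _ _, Finset.pairwise_sort _ _, ?_⟩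
    intro a ha b hb
    rw [Finset.mem_sort] at ha hb
    exact (h a ha b hb).le
  exact List.Perm.eq_of_pairwise' (Finset.pairwise_sort _ _) hsorted hperm

lemma aux_sort_foldr : ∀ (L : List (Finset ℤ)),
    L.Pairwise (fun A B => ∀ a ∈ A, ∀ b ∈ B, a < b) →
    (L.foldr (· ∪ ·) ∅).sort (· ≤ ·) = (L.map (fun s : Finset ℤ => s.sort (· ≤ ·))).flatten
  | [], _ => by simp
  | A :: L, hp => by
    rw [List.pairwise_cons] at hp
    have hcross : ∀ a ∈ A, ∀ b ∈ L.foldr (· ∪ ·) ∅, a < b := by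
      intro a ha b hb
      obtain ⟨C, hC, hbC⟩ := (aux_mem_foldr_union L).mp hb
      exact hp.1 C hC a ha b hbC
    rw [List.foldr_cons, aux_sort_union hcross, aux_sort_foldr L hp.2, List.map_cons]
    simp [List.flatten_cons]

lemma aux_map_sort {A : Finset ℤ} {p : ℤ → Bool} {b : Bool}
    (h : ∀ a ∈ A, p a = b) :
    (A.sort (· ≤ ·)).map p = List.replicate A.card b := by
  rw [List.eq_replicate_iff]
  constructor
  · simp
  · intro c hc
    rw [List.mem_map] at hc
    obtain ⟨a, ha, rfl⟩ := hc
    exact h a (by simpa using ha)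

lemma pblock_length (k : ℕ) (b : Bool) : (pblock k b).length = 2 * k := by
  cases b <;> simp [pblock, two_mul]

lemma pblock_head (k : ℕ) (hk : 0 < k) (b : Bool) : (pblock k b).head? = some b := by
  cases b <;> cases k <;> simp_all [pblock, List.replicate_succ]

lemma aux_join_inj : ∀ (l : List ℕ) (t₁ t₂ : List Bool), (∀ k ∈ l, 0 < k) →
    t₁.length = l.length → t₂.length = l.length →
    (List.zipWith pblock l t₁).flatten = (List.zipWith pblock l t₂).flatten → t₁ = t₂
  | [], [], [], _, _, _, _ => rfl
  | k :: l, b₁ :: t₁, b₂ :: t₂, hpos, h₁, h₂, heq => by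
    rw [List.zipWith_cons_cons, List.zipWith_cons_cons] at heq
    simp only [List.flatten_cons] at heq
    have hlen : (pblock k b₁).length = (pblock k b₂).length := by
      rw [pblock_length, pblock_length]
    obtain ⟨hb, ht⟩ := List.append_inj heq hlen
    have hk : 0 < k := hpos k (by simp)
    have : some b₁ = some b₂ := by
      rw [← pblock_head k hk b₁, ← pblock_head k hk b₂, hb]
    obtain rfl := Option.some_injective _ this
    have := aux_join_inj l t₁ t₂ (fun k hk => hpos k (by simp [hk]))
      (by simpa using h₁) (by simpa using h₂) ht
    rw [this]

end Aux

lemma aux_ofFn_zipWith (lam : List ℕ) (τ : Fin lam.length → Bool) :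
    (List.ofFn fun i => pblock (lam.get i) (τ i)) = List.zipWith pblock lam (List.ofFn τ) := by
  apply List.ext_getElem
  · simp
  · intro i h1 h2
    simp [List.getElem_zipWith]

lemma patternOfParts_injective {lam : List ℕ} (hpos : ∀ k ∈ lam, 0 < k)
    {τ₁ τ₂ : Fin lam.length → Bool} (h : patternOfParts lam τ₁ = patternOfParts lam τ₂) :
    τ₁ = τ₂ := by
  unfold patternOfParts at h
  rw [aux_ofFn_zipWith, aux_ofFn_zipWith] at h
  exact List.ofFn_injective
    (aux_join_inj lam (List.ofFn τ₁) (List.ofFn τ₂) hpos (by simp) (by simp) h)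

/-- If `H` is interval-wise `lam`-partite and for each `P ∈ 𝒫(lam)` every `P`-clique in `H`
has size at most `m P`, then `|H| ≤ ∏_{P ∈ 𝒫(lam)} m P`. -/
theorem interval_wise_partite_bound (r : ℕ) (hr : 0 < r) (lam : List ℕ)
    (hlam : IsOrderedPartition r lam)
    (m : List Bool → ℕ) (hm : ∀ P ∈ patternFinset lam, 0 < m P)
    (H : Finset (Finset ℤ))
    (hcard : ∀ e ∈ H, e.card = r)
    (hdisj : ∀ e ∈ H, ∀ f ∈ H, e ≠ f → Disjoint e f)
    (hpart : IsIntervalWisePartite lam H)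
    (hclique : ∀ P ∈ patternFinset lam, ∀ S ⊆ H, IsPClique P S → S.card ≤ m P) :
    H.card ≤ ∏ P ∈ patternFinset lam, m P := by
  classical
  obtain ⟨x, hmono, hnint, hcnt, hsep⟩ := hpart
  obtain ⟨hsum, hpos⟩ := hlam
  have hs0 : 0 < lam.length := by
    rcases lam with _ | ⟨k, l⟩
    · simp at hsum; omega
    · simp
  set Q : Fin lam.length → Finset ℤ → Finset ℤ :=
    fun i e => e.filter (fun z => x i.castSucc < (z : ℝ) ∧ (z : ℝ) < x i.succ) with hQ
  have hQmem : ∀ (i : Fin lam.length) (e : Finset ℤ) (z : ℤ),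
      z ∈ Q i e ↔ z ∈ e ∧ (x i.castSucc < (z : ℝ) ∧ (z : ℝ) < x i.succ) := by
    intro i e z
    simp [hQ, Finset.mem_filter]
  have hQcard : ∀ e ∈ H, ∀ i, (Q i e).card = lam.get i := by
    intro e he i
    have hset : {z : ℤ | z ∈ e ∧ x i.castSucc < (z : ℝ) ∧ (z : ℝ) < x i.succ} = ↑(Q i e) := by
      ext z
      simp [hQmem i e z]
    have := hcnt e he i
    rwa [hset, Set.ncard_coe_finset] at this
  have hQsub : ∀ (i : Fin lam.length) (e : Finset ℤ), Q i e ⊆ e :=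
    fun i e => Finset.filter_subset _ _
  have hxlt : ∀ (i j : Fin lam.length), i < j → ∀ (e f : Finset ℤ),
      ∀ a ∈ Q i e, ∀ b ∈ Q j f, a < b := by
    intro i j hij e f a ha b hb
    rw [hQmem] at ha hb
    have hle : x i.succ ≤ x j.castSucc := by
      apply hmono.monotone
      rw [Fin.le_def]
      simp only [Fin.val_succ, Fin.coe_castSucc]
      exact hij
    have : (a : ℝ) < (b : ℝ) := ha.2.2.trans (hle.trans_lt hb.2.1)
    exact_mod_cast this
  have hpartition : ∀ e ∈ H, Finset.univ.biUnion (fun i => Q i e) = e := by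
    intro e he
    apply Finset.eq_of_subset_of_card_le
    · intro z hz
      rw [Finset.mem_biUnion] at hz
      obtain ⟨i, _, hzi⟩ := hz
      exact hQsub i e hzi
    · have hdisjQ : ∀ i ∈ Finset.univ, ∀ j ∈ Finset.univ, i ≠ j →
          Disjoint (Q i e) (Q j e) := by
        intro i _ j _ hij
        rcases lt_or_gt_of_ne hij with hlt | hlt
        · exact Finset.disjoint_left.mpr fun {a} ha hb =>
            absurd (hxlt i j hlt e e a ha a hb) (lt_irrefl a)
        · exact Finset.disjoint_left.mpr fun {a} ha hb =>
            absurd (hxlt j i hlt e e a hb a ha) (lt_irrefl a)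
      rw [Finset.card_biUnion hdisjQ]
      have h1 : ∑ i : Fin lam.length, (Q i e).card = ∑ i : Fin lam.length, lam.get i :=
        Finset.sum_congr rfl fun i _ => hQcard e he i
      have h2 : ∑ i : Fin lam.length, lam.get i = lam.sum := by
        rw [← List.sum_ofFn, List.ofFn_get]
      rw [h1, h2, hsum, hcard e he]
  have hmem_part : ∀ e ∈ H, ∀ z ∈ e, ∃ i, z ∈ Q i e := by
    intro e he z hz
    rw [← hpartition e he, Finset.mem_biUnion] at hz
    obtain ⟨i, _, hi⟩ := hz
    exact ⟨i, hi⟩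
  have hQne : ∀ e ∈ H, ∀ i, (Q i e).Nonempty := by
    intro e he i
    rw [← Finset.card_pos, hQcard e he i]
    exact hpos _ (lam.get_mem i)
  set B : Fin lam.length → Finset ℤ → Finset ℤ → Prop :=
    fun i e f => ∀ a ∈ Q i e, ∀ b ∈ Q i f, a < b with hB
  have hBdef : ∀ (i : Fin lam.length) (e f : Finset ℤ),
      B i e f ↔ (∀ a ∈ Q i e, ∀ b ∈ Q i f, a < b) := by
    intro i e f; rw [hB]
  have hBtotal : ∀ e ∈ H, ∀ f ∈ H, e ≠ f → ∀ i, B i e f ∨ B i f e := by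
    intro e he f hf hef i
    rcases hsep i e he f hf hef with h | h
    · left
      intro a ha b hb
      rw [hQmem] at ha hb
      exact h a ha.1 b hb.1 ha.2 hb.2
    · right
      intro u hu v hv
      rw [hQmem] at hu hv
      exact h v hv.1 u hu.1 hv.2 hu.2
  have hBasym : ∀ e ∈ H, ∀ f ∈ H, ∀ i, B i e f → ¬ B i f e := by
    intro e he f hf i h1 h2
    obtain ⟨a, ha⟩ := hQne e he i
    obtain ⟨b, hb⟩ := hQne f hf i
    exact absurd (h1 a ha b hb) (not_lt.mpr (h2 b hb a ha).le)
  have hBtrans : ∀ (e f g : Finset ℤ), f ∈ H → ∀ i, B i e f → B i f g → B i e g := by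
    intro e f g hf i h1 h2 a ha c hc
    obtain ⟨b, hb⟩ := hQne f hf i
    exact (h1 a ha b hb).trans (h2 b hb c hc)
  set tau : Finset ℤ → Finset ℤ → Fin lam.length → Bool :=
    fun e f i => decide (B i e f) with htau
  have htaudef : ∀ (e f : Finset ℤ) (i : Fin lam.length), tau e f i = decide (B i e f) := by
    intro e f i; rw [htau]
  have hcore : ∀ e ∈ H, ∀ f ∈ H, e ≠ f →
      patternOfPair e f = patternOfParts lam (tau e f) := by
    intro e he f hf hef
    have hunion : e ∪ f = (List.ofFn fun i => Q i e ∪ Q i f).foldr (· ∪ ·) ∅ := by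
      ext z
      rw [aux_mem_foldr_union]
      constructor
      · intro hz
        rcases Finset.mem_union.mp hz with h | h
        · obtain ⟨i, hi⟩ := hmem_part e he z h
          exact ⟨Q i e ∪ Q i f, by rw [List.mem_ofFn]; exact ⟨i, rfl⟩,
            Finset.mem_union_left _ hi⟩
        · obtain ⟨i, hi⟩ := hmem_part f hf z h
          exact ⟨Q i e ∪ Q i f, by rw [List.mem_ofFn]; exact ⟨i, rfl⟩,
            Finset.mem_union_right _ hi⟩
      · rintro ⟨C, hC, hzC⟩
        rw [List.mem_ofFn] at hC
        obtain ⟨i, rfl⟩ := hC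
        rcases Finset.mem_union.mp hzC with h | h
        · exact Finset.mem_union_left _ (hQsub i e h)
        · exact Finset.mem_union_right _ (hQsub i f h)
    have hpw : (List.ofFn fun i => Q i e ∪ Q i f).Pairwise
        (fun A B => ∀ a ∈ A, ∀ b ∈ B, a < b) := by
      rw [List.pairwise_ofFn]
      intro i j hij a ha b hb
      rcases Finset.mem_union.mp ha with h | h <;> rcases Finset.mem_union.mp hb with h' | h'
      · exact hxlt i j hij e e a h b h'
      · exact hxlt i j hij e f a h b h'
      · exact hxlt i j hij f e a h b h'
      · exact hxlt i j hij f f a h b h'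
    have hblock : ∀ i : Fin lam.length,
        ((Q i e ∪ Q i f).sort (· ≤ ·)).map (fun z => decide (z ∈ e))
          = pblock (lam.get i) (tau e f i) := by
      intro i
      have hQe : ∀ a ∈ Q i e, (fun z => decide (z ∈ e)) a = true := by
        intro a ha; simp [hQsub i e ha]
      have hQf : ∀ b ∈ Q i f, (fun z => decide (z ∈ e)) b = false := by
        intro b hb
        simp only [decide_eq_false_iff_not]
        exact fun hbe => (Finset.disjoint_left.mp (hdisj e he f hf hef) hbe) (hQsub i f hb)
      by_cases hbi : B i e f
      · have htaui : tau e f i = true := by rw [htaudef]; exact decide_eq_true hbi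
        rw [htaui, aux_sort_union ((hBdef i e f).mp hbi), List.map_append,
          aux_map_sort hQe, aux_map_sort hQf, hQcard e he i, hQcard f hf i]
        simp [pblock]
      · have hfe : B i f e := (hBtotal e he f hf hef i).resolve_left hbi
        have htaui : tau e f i = false := by rw [htaudef]; exact decide_eq_false hbi
        rw [htaui, Finset.union_comm, aux_sort_union ((hBdef i f e).mp hfe), List.map_append,
          aux_map_sort hQf, aux_map_sort hQe, hQcard e he i, hQcard f hf i]
        simp [pblock]
    calc patternOfPair e f
        = (((List.ofFn fun i => Q i e ∪ Q i f).map (fun s : Finset ℤ => s.sort (· ≤ ·))).flatten).map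
            (fun z => decide (z ∈ e)) := by
          rw [patternOfPair, hunion, aux_sort_foldr _ hpw]
      _ = (List.ofFn fun i =>
            ((Q i e ∪ Q i f).sort (· ≤ ·)).map (fun z => decide (z ∈ e))).flatten := by
          simp only [List.map_flatten, List.map_ofFn, Function.comp]
          rfl
      _ = patternOfParts lam (tau e f) := by
          rw [patternOfParts]
          exact congrArg _ (congrArg List.ofFn (funext hblock))
  have hmemP : ∀ (e f : Finset ℤ), tau e f ⟨0, hs0⟩ = true →
      patternOfParts lam (tau e f) ∈ patternFinset lam := by
    intro e f h0
    rw [patternFinset]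
    exact Finset.mem_image_of_mem _ (Finset.mem_filter.mpr ⟨Finset.mem_univ _, fun _ => h0⟩)
  have hreal : ∀ e ∈ H, ∀ f ∈ H, e ≠ f →
      tau e f ⟨0, hs0⟩ = true ∨ tau f e ⟨0, hs0⟩ = true := by
    intro e he f hf hef
    rcases hBtotal e he f hf hef ⟨0, hs0⟩ with h | h
    · left; rw [htaudef]; exact decide_eq_true h
    · right; rw [htaudef]; exact decide_eq_true h
  have hasym : ∀ e ∈ H, ∀ f ∈ H, e ≠ f → patternOfPair e f ≠ patternOfPair f e := by
    intro e he f hf hef heq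
    rw [hcore e he f hf hef, hcore f hf e he hef.symm] at heq
    have hteq := patternOfParts_injective hpos heq
    have h0 : B ⟨0, hs0⟩ e f ↔ B ⟨0, hs0⟩ f e := by
      have hc := congrFun hteq ⟨0, hs0⟩
      rw [htaudef, htaudef] at hc
      exact decide_eq_decide.mp hc
    rcases hBtotal e he f hf hef ⟨0, hs0⟩ with h | h
    · exact hBasym e he f hf _ h (h0.mp h)
    · exact hBasym f hf e he _ h (h0.mpr h)
  have htrans : ∀ e ∈ H, ∀ f ∈ H, ∀ g ∈ H, e ≠ f → f ≠ g →
      patternOfPair e f = patternOfPair f g →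
      e ≠ g ∧ patternOfPair e g = patternOfPair e f := by
    intro e he f hf g hg hef hfg heq
    rw [hcore e he f hf hef, hcore f hf g hg hfg] at heq
    have hteq : tau e f = tau f g := patternOfParts_injective hpos heq
    have hiff : ∀ i, B i e f ↔ B i f g := by
      intro i
      have hc := congrFun hteq i
      rw [htaudef, htaudef] at hc
      exact decide_eq_decide.mp hc
    have heg : e ≠ g := by
      rintro rfl
      rcases hBtotal e he f hf hef ⟨0, hs0⟩ with h | h
      · exact hBasym e he f hf _ h ((hiff _).mp h)
      · exact hBasym f hf e he _ h ((hiff _).mpr h)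
    refine ⟨heg, ?_⟩
    rw [hcore e he g hg heg, hcore e he f hf hef]
    refine congrArg _ (funext fun i => ?_)
    by_cases hb : B i e f
    · have hbfg : B i f g := (hiff i).mp hb
      have hbeg : B i e g := hBtrans e f g hf i hb hbfg
      rw [htaudef, htaudef, decide_eq_true hbeg, decide_eq_true hb]
    · have hbfe : B i f e := (hBtotal e he f hf hef i).resolve_left hb
      have hbgf : B i g f := (hBtotal f hf g hg hfg i).resolve_left
        (fun hfg' => hb ((hiff i).mpr hfg'))
      have hbge : B i g e := hBtrans g f e hf i hbgf hbfe
      have hne : ¬ B i e g := hBasym g hg e he i hbge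
      rw [htaudef, htaudef, decide_eq_false hne, decide_eq_false hb]
  set ht : List Bool → Finset ℤ → ℕ := fun P e =>
    ((H.powerset.filter (fun S => IsPClique P S ∧
      ∀ g ∈ S, g ≠ e → patternOfPair g e = P)).sup Finset.card) with hht
  have htdef : ∀ (P : List Bool) (e : Finset ℤ), ht P e =
      ((H.powerset.filter (fun S => IsPClique P S ∧
        ∀ g ∈ S, g ≠ e → patternOfPair g e = P)).sup Finset.card) := by
    intro P e; rw [hht]
  have hsingleton : ∀ e ∈ H, ∀ P : List Bool,
      ({e} : Finset (Finset ℤ)) ∈ H.powerset.filter (fun S => IsPClique P S ∧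
        ∀ g ∈ S, g ≠ e → patternOfPair g e = P) := by
    intro e he P
    rw [Finset.mem_filter, Finset.mem_powerset]
    refine ⟨Finset.singleton_subset_iff.mpr he, ?_, ?_⟩
    · intro a ha b hb hab
      rw [Finset.mem_singleton] at ha hb
      exact absurd (ha.trans hb.symm) hab
    · intro g hg hge
      rw [Finset.mem_singleton] at hg
      exact absurd hg hge
  have ht_ge1 : ∀ e ∈ H, ∀ P : List Bool, 1 ≤ ht P e := by
    intro e he P
    rw [htdef]
    calc 1 = ({e} : Finset (Finset ℤ)).card := by simp
      _ ≤ _ := Finset.le_sup (hsingleton e he P)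
  have ht_le : ∀ P ∈ patternFinset lam, ∀ e : Finset ℤ, ht P e ≤ m P := by
    intro P hP e
    rw [htdef]
    apply Finset.sup_le
    intro S hS
    rw [Finset.mem_filter, Finset.mem_powerset] at hS
    exact hclique P hP S hS.1 hS.2.1
  have ht_lt : ∀ e ∈ H, ∀ f ∈ H, e ≠ f → ∀ P : List Bool, patternOfPair e f = P →
      ht P e < ht P f := by
    intro e he f hf hef P hR
    obtain ⟨S, hSmem, hScard⟩ := Finset.exists_mem_eq_sup _ ⟨{e}, hsingleton e he P⟩
      Finset.card
    rw [Finset.mem_filter, Finset.mem_powerset] at hSmem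
    obtain ⟨hSH, hSclique, hSrel⟩ := hSmem
    have hfS : f ∉ S := by
      intro hfS
      exact hasym e he f hf hef (hR.trans (hSrel f hfS hef.symm).symm)
    have hrelf : ∀ g ∈ S, g ≠ f → patternOfPair g f = P := by
      intro g hgS hgf
      by_cases hge : g = e
      · rw [hge]; exact hR
      · have h1 := hSrel g hgS hge
        have h2 := htrans g (hSH hgS) e he f hf hge hef (h1.trans hR.symm)
        rw [h2.2, h1]
    have hclq : IsPClique P (insert f S) := by
      intro a ha b hb hab
      rcases Finset.mem_insert.mp ha with rfl | ha'
      · rcases Finset.mem_insert.mp hb with rfl | hb'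
        · exact absurd rfl hab
        · exact Or.inr (hrelf b hb' (fun hbf => hab hbf.symm))
      · rcases Finset.mem_insert.mp hb with rfl | hb'
        · exact Or.inl (hrelf a ha' hab)
        · exact hSclique a ha' b hb' hab
    have hmem' : insert f S ∈ H.powerset.filter (fun S => IsPClique P S ∧
        ∀ g ∈ S, g ≠ f → patternOfPair g f = P) := by
      rw [Finset.mem_filter, Finset.mem_powerset]
      refine ⟨Finset.insert_subset hf hSH, hclq, ?_⟩
      intro g hg hgf
      rcases Finset.mem_insert.mp hg with rfl | hg'
      · exact absurd rfl hgf
      · exact hrelf g hg' hgf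
    have hle : (insert f S).card ≤ ht P f := by
      rw [htdef]
      exact Finset.le_sup hmem'
    rw [Finset.card_insert_of_notMem hfS] at hle
    have heq2 : ht P e = S.card := by rw [htdef]; exact hScard
    rw [heq2]
    exact Nat.lt_of_succ_le hle
  have hexists : ∀ e ∈ H, ∀ f ∈ H, e ≠ f → ∃ P ∈ patternFinset lam, ht P e ≠ ht P f := by
    intro e he f hf hef
    rcases hreal e he f hf hef with h0 | h0
    · exact ⟨patternOfParts lam (tau e f), hmemP e f h0,
        (ht_lt e he f hf hef _ (hcore e he f hf hef)).ne⟩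
    · exact ⟨patternOfParts lam (tau f e), hmemP f e h0,
        (ht_lt f hf e he hef.symm _ (hcore f hf e he hef.symm)).ne'⟩
  calc H.card ≤ ((patternFinset lam).pi (fun P => Finset.Icc 1 (m P))).card := by
        apply Finset.card_le_card_of_injOn (fun e => fun P _ => ht P e)
        · intro e he
          rw [Finset.mem_coe, Finset.mem_pi]
          intro P hP
          rw [Finset.mem_Icc]
          exact ⟨ht_ge1 e he P, ht_le P hP e⟩
        · intro e he f hf heq
          by_contra hef
          obtain ⟨P, hP, hne⟩ := hexists e (by simpa using he) f (by simpa using hf) hef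
          exact hne (congrFun (congrFun heq P) hP)
    _ = ∏ P ∈ patternFinset lam, m P := by
        rw [Finset.card_pi]
        exact Finset.prod_congr rfl fun P _ => by rw [Nat.card_Icc]; omega
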